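/- Let p be an odd prime, let b, c be integers, and let k be an integer with -p ≤ k ≤ p. Then (k+1)·C(p-1, k-1)_{b,c} - (k-1)·c·C(p-1, k+1)_{b,c} ≡ C(p, k)_{b,c} - (b² - 4c)·C(p-2, k)_{b,c} (mod p). -/

import Mathlib

open Polynomial in
/-- The generalized trinomial coefficient `C(n,k)_{b,c}`: the coefficient of `x^(n+k)`
in `(x² + b·x + c)^n`; it vanishes when `n + k < 0` (in particular when `|k| > n`). -/
noncomputable def gtc (b c : ℤ) (n : ℕ) (k : ℤ) : ℤ :=
  if 0 ≤ (n : ℤ) + k then ((X ^ 2 + C b * X + C c) ^ n).coeff ((n : ℤ) + k).toNat else 0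

open Polynomial

private lemma gtc_eq_coeff (b c : ℤ) (n : ℕ) (j : ℤ) (s m : ℕ)
    (h2 : -(s : ℤ) ≤ (n : ℤ) + j) (hm : (m : ℤ) = (n : ℤ) + j + s) :
    gtc b c n j = ((X : ℤ[X]) ^ s * (X ^ 2 + C b * X + C c) ^ n).coeff m := by
  rw [coeff_X_pow_mul']
  unfold gtc
  by_cases h : 0 ≤ (n : ℤ) + j
  · rw [if_pos h, if_pos (by omega)]
    congr 1
    omega
  · rw [if_neg h, if_neg (by omega)]

private lemma coeff_deriv_X_mul (u : ℤ[X]) (M : ℕ) :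
    (derivative (X * u)).coeff M = ((M : ℤ) + 1) * u.coeff M := by
  rw [coeff_derivative, coeff_X_mul]
  push_cast
  ring

theorem stmt8 (p : ℕ) (hp : p.Prime) (hp2 : p ≠ 2) (b c k : ℤ)
    (hk1 : -(p : ℤ) ≤ k) (hk2 : k ≤ (p : ℤ)) :
    (k + 1) * gtc b c (p - 1) (k - 1) - (k - 1) * c * gtc b c (p - 1) (k + 1) ≡
      gtc b c p k - (b ^ 2 - 4 * c) * gtc b c (p - 2) k [ZMOD (p : ℤ)] := by
  have hp2' : 2 ≤ p := hp.two_le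
  set f : ℤ[X] := X ^ 2 + C b * X + C c with hf
  set M : ℕ := ((p : ℤ) + k + 2).toNat with hMdef
  have hM : (M : ℤ) = (p : ℤ) + k + 2 := by omega
  have e1 : ((p - 1 : ℕ) : ℤ) = (p : ℤ) - 1 := by omega
  have e2 : ((p - 2 : ℕ) : ℤ) = (p : ℤ) - 2 := by omega
  -- express the four gtc's as coefficients at M
  have h1 : gtc b c p k = ((X : ℤ[X]) ^ 2 * f ^ p).coeff M :=
    gtc_eq_coeff b c p k 2 M (by omega) (by omega)
  have h2 : gtc b c (p - 1) (k + 1) = ((X : ℤ[X]) ^ 2 * f ^ (p - 1)).coeff M :=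
    gtc_eq_coeff b c (p - 1) (k + 1) 2 M (by omega) (by omega)
  have h3 : gtc b c (p - 1) (k - 1) = ((X : ℤ[X]) ^ 4 * f ^ (p - 1)).coeff M :=
    gtc_eq_coeff b c (p - 1) (k - 1) 4 M (by omega) (by omega)
  have h4 : gtc b c (p - 2) k = ((X : ℤ[X]) ^ 4 * f ^ (p - 2)).coeff M :=
    gtc_eq_coeff b c (p - 2) k 4 M (by omega) (by omega)
  set A : ℤ := ((X : ℤ[X]) ^ 4 * f ^ (p - 1)).coeff M with hA
  set B : ℤ := ((X : ℤ[X]) ^ 2 * f ^ (p - 1)).coeff M with hB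
  -- the key polynomial identity in ℤ[X]
  set P : ℤ[X] := derivative (X * (X ^ 4 * f ^ (p - 1))) - 2 * (X ^ 4 * f ^ (p - 1))
      - C c * (derivative (X * (X ^ 2 * f ^ (p - 1))) - 4 * (X ^ 2 * f ^ (p - 1))) with hP
  set Q : ℤ[X] := X ^ 2 * f ^ p - C (b ^ 2 - 4 * c) * (X ^ 4 * f ^ (p - 2)) with hQ
  set R : ℤ[X] := X ^ 2 * (X ^ 3 - C c * X) * (f ^ (p - 2) * derivative f) with hR
  have hdf : derivative f = C (2 : ℤ) * X + C b := by
    rw [hf]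
    simp [derivative_X_pow]
  have hg' : derivative (f ^ (p - 1)) = (C ((p : ℤ)) - 1) * (f ^ (p - 2) * derivative f) := by
    rw [derivative_pow, e1]
    have : p - 1 - 1 = p - 2 := by omega
    rw [this, map_sub, map_one]
    ring
  have hgp : f ^ p = f * f * f ^ (p - 2) := by
    have h : p = p - 2 + 2 := by omega
    conv_lhs => rw [h]
    rw [pow_add]
    ring
  have hg : f ^ (p - 1) = f * f ^ (p - 2) := by
    have h : p - 1 = p - 2 + 1 := by omega
    conv_lhs => rw [h]
    rw [pow_add]
    ring
  have key : P = Q + C ((p : ℤ)) * R := by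
    rw [hP, hQ, hR]
    simp only [derivative_mul, derivative_X, derivative_X_pow, hg']
    simp only [hgp, hg, hdf, map_sub, map_mul, map_pow, map_add, map_one, map_ofNat,
      Nat.cast_ofNat]
    rw [hf]
    ring
  -- coefficient computations
  have cP : P.coeff M = ((M : ℤ) + 1) * A - 2 * A - c * (((M : ℤ) + 1) * B - 4 * B) := by
    rw [hP]
    simp only [coeff_sub, coeff_C_mul, coeff_ofNat_mul, coeff_deriv_X_mul]
    rfl
  have cQ : Q.coeff M = gtc b c p k - (b ^ 2 - 4 * c) * gtc b c (p - 2) k := by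
    rw [hQ, coeff_sub, coeff_C_mul, ← h1, ← h4]
  have cPQ : P.coeff M = Q.coeff M + (p : ℤ) * R.coeff M := by
    rw [key, coeff_add, coeff_C_mul]
  -- put it together
  have hk1' : k + 1 = ((M : ℤ) + 1) - 2 - (p : ℤ) := by omega
  have hk2' : k - 1 = ((M : ℤ) + 1) - 4 - (p : ℤ) := by omega
  have main : (k + 1) * gtc b c (p - 1) (k - 1) - (k - 1) * c * gtc b c (p - 1) (k + 1)
      - (gtc b c p k - (b ^ 2 - 4 * c) * gtc b c (p - 2) k)
      = (p : ℤ) * (R.coeff M - A + c * B) := by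
    rw [h2, h3, ← cQ, hk1', hk2']
    have hh := cPQ
    rw [cP] at hh
    linarith [hh]
  rw [Int.modEq_iff_dvd]
  exact ⟨-(R.coeff M - A + c * B), by linarith [main]⟩
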